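/- Let λ_n be the largest eigenvalue of the n × n symmetric matrix A_n with diagonal entries 2cos(2πk/n), k = 0,...,n-1, ones on the first super- and sub-diagonals, and ones in the corners (1,n) and (n,1). Then for all sufficiently large n, λ_n < 4 - 2/n. -/

import Mathlib

/-- The n × n matrix of the operator x + x⁻¹ + y + y⁻¹ in the representation T_q of
the finite Heisenberg group: diagonal entries 2cos(2πqk/n), ones on the first super-
and sub-diagonals and in the corners (periodic tridiagonal). -/
noncomputable def heisMatrix (n q : ℕ) : Matrix (Fin n) (Fin n) ℝ :=
  Matrix.of fun i j : Fin n =>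
    if i = j then 2 * Real.cos (2 * Real.pi * q * (i : ℕ) / n)
    else if ((i : ℕ) + 1) % n = (j : ℕ) ∨ ((j : ℕ) + 1) % n = (i : ℕ) then 1
    else 0

open Real Finset

set_option maxHeartbeats 1000000


lemma exp_neg_le_quad {h : ℝ} (h0 : 0 ≤ h) : Real.exp (-h) ≤ 1 - h + h^2/2 := by
  have he : 1 + h + h^2/2 ≤ Real.exp h := by
    have := Real.sum_le_exp_of_nonneg h0 3
    simpa [Finset.sum_range_succ, Nat.factorial] using this
  have hpos : (0:ℝ) < 1 + h + h^2/2 := by positivity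
  have hq : (0:ℝ) < 1 - h + h^2/2 := by nlinarith [sq_nonneg (h - 1)]
  rw [Real.exp_neg]
  rw [inv_le_iff_one_le_mul₀ (lt_of_lt_of_le hpos he)]
  nlinarith [pow_pos (lt_of_lt_of_le hpos he) 2, sq_nonneg h]

lemma cos_le_quad {s : ℝ} (h0 : 0 ≤ s) (h2 : s ≤ 2) : Real.cos s ≤ 1 - s^2/2 + s^4/16 := by
  rcases eq_or_lt_of_le h0 with rfl | hs
  · norm_num
  · have hy0 : 0 < s/2 := by linarith
    have hy1 : s/2 ≤ 1 := by linarith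
    have hsin : s/2 - (s/2)^3/4 < Real.sin (s/2) := by
        have := Real.sin_gt_sub_cube hy0; linarith [pow_pos hy0 3]
    have hnn : 0 ≤ s/2 - (s/2)^3/4 := by nlinarith [pow_le_one₀ (le_of_lt hy0) hy1 (n := 3), pow_pos hy0 3, sq_nonneg (s/2)]
    have hsq : (s/2 - (s/2)^3/4)^2 ≤ Real.sin (s/2)^2 := by nlinarith
    have hcos : Real.cos s = 1 - 2 * Real.sin (s/2)^2 := by
      have h1 := Real.cos_two_mul (s/2)
      have h2' := Real.sin_sq_add_cos_sq (s/2)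
      have : 2 * (s/2) = s := by ring
      rw [this] at h1
      nlinarith
    rw [hcos]
    nlinarith [pow_pos hy0 6]

lemma exp_add_exp_neg_le {t : ℝ} (h0 : 0 ≤ t) (h1 : t ≤ 1) :
    Real.exp t + Real.exp (-t) ≤ 2 + t^2 + t^4/8 := by
  have ha : |t| ≤ 1 := by rw [abs_of_nonneg h0]; exact h1
  have hb : |(-t)| ≤ 1 := by rwa [abs_neg]
  have e1 := Real.exp_bound ha (n := 6) (by norm_num)
  have e2 := Real.exp_bound hb (n := 6) (by norm_num)
  rw [abs_le] at e1 e2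
  have s1 : ∑ i ∈ range 6, t ^ i / (Nat.factorial i : ℝ)
      = 1 + t + t^2/2 + t^3/6 + t^4/24 + t^5/120 := by
    simp [Finset.sum_range_succ, Nat.factorial]
  have s2 : ∑ i ∈ range 6, (-t) ^ i / (Nat.factorial i : ℝ)
      = 1 - t + t^2/2 - t^3/6 + t^4/24 - t^5/120 := by
    simp [Finset.sum_range_succ, Nat.factorial]; ring
  rw [s1] at e1
  rw [s2] at e2
  rw [abs_of_nonneg h0] at e1
  rw [abs_neg, abs_of_nonneg h0] at e2
  have ht2 : t^2 ≤ 1 := by nlinarith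
  have ht6 : t^6 ≤ t^4 := by
    calc t^6 = t^4*t^2 := by ring
    _ ≤ t^4*1 := mul_le_mul_of_nonneg_left ht2 (pow_nonneg h0 4)
    _ = t^4 := mul_one _
  norm_num [Nat.factorial] at e1 e2
  nlinarith [e1.2, e2.2]

lemma pi_sq_lb : (9.85:ℝ) ≤ Real.pi^2 := by
  nlinarith [Real.pi_gt_d2]

lemma pi_sq_ub : Real.pi^2 ≤ 9.93 := by
  nlinarith [Real.pi_lt_d2, Real.pi_gt_d2]

lemma pi_quad_ub : Real.pi^4 ≤ 98.7 := by
  nlinarith [pi_sq_ub, pi_sq_lb]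

lemma coreA {x c : ℝ} (hx0 : 0 ≤ x) (hx : x ≤ 1/4)
    (hcos : Real.cos (2*Real.pi*x) ≤ 1 - (2*Real.pi*x)^2/2 + (2*Real.pi*x)^4/16)
    (hc : c ≤ 2 + (4*x)^2 + (4*x)^4/8) :
    c ≤ 4 - 2*Real.cos (2*Real.pi*x) := by
  have hx2 : x^2 ≤ 1/16 := by nlinarith
  have hx2nn : 0 ≤ x^2 := sq_nonneg x
  have hx4nn : 0 ≤ x^4 := by positivity
  have hyy : x^4 ≤ (1/16)*x^2 := by nlinarith
  have hb1 : Real.pi^4*x^4 ≤ 98.7*x^4 := mul_le_mul_of_nonneg_right pi_quad_ub hx4nn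
  have hb2 : 9.85*x^2 ≤ Real.pi^2*x^2 := mul_le_mul_of_nonneg_right pi_sq_lb hx2nn
  nlinarith [hcos, hc]

lemma caseA_assemble {h C M : ℝ} (hh0 : 0 ≤ h) (hC2 : 2 ≤ C) (hCM : C ≤ M)
    (hM6 : M ≤ 6) : (1 - h + h^2/2) * C ≤ M - 2*h + 3*h^2 := by
  have p1 : h*2 ≤ h*C := mul_le_mul_of_nonneg_left hC2 hh0
  have p2 : (h^2/2)*C ≤ (h^2/2)*6 :=
    mul_le_mul_of_nonneg_left (le_trans hCM hM6) (by positivity)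
  nlinarith

lemma cos_bound_B {k n : ℝ} (hn : 100 ≤ n) (hk0 : 0 ≤ k) (hk4 : n - 2 ≤ 4*k)
    (h2k : 2*k ≤ n) : Real.cos (2*Real.pi*k/n) ≤ Real.pi/n := by
  have hnpos : (0:ℝ) < n := by linarith
  have hpi0 : 0 < Real.pi := Real.pi_pos
  have heq2 : Real.pi/2 - Real.pi/n = Real.pi*(n-2)/(2*n) := by
    field_simp
  have hc1 : Real.pi/2 - Real.pi/n ≤ 2*Real.pi*k/n := by
    rw [heq2, div_le_div_iff₀ (by positivity) hnpos]
    nlinarith [mul_nonneg (mul_nonneg hpi0.le hnpos.le)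
      (by linarith : (0:ℝ) ≤ 4*k - (n-2))]
  have hc2 : 2*Real.pi*k/n ≤ Real.pi := by
    rw [div_le_iff₀ hnpos]
    nlinarith [mul_nonneg hpi0.le (by linarith : (0:ℝ) ≤ n - 2*k)]
  have hc0 : 0 ≤ Real.pi/2 - Real.pi/n := by
    have : Real.pi/n ≤ Real.pi/2 :=
      div_le_div_of_nonneg_left hpi0.le (by norm_num) (by linarith)
    linarith
  calc Real.cos (2*Real.pi*k/n) ≤ Real.cos (Real.pi/2 - Real.pi/n) :=
        Real.cos_le_cos_of_nonneg_of_le_pi hc0 hc2 hc1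
    _ = Real.sin (Real.pi/n) := Real.cos_pi_div_two_sub _
    _ ≤ Real.pi/n := Real.sin_le (by positivity)

lemma caseB_final {n E1 E2 c : ℝ} (hn : 100 ≤ n) (h1 : E1 ≤ 1)
    (h2 : E2 ≤ Real.exp 1) (hc : c ≤ Real.pi/n) :
    E1 + E2 + 2*c ≤ 4 - 3/n := by
  have hnpos : (0:ℝ) < n := by linarith
  have he1 : Real.exp 1 < 2.7182818286 := Real.exp_one_lt_d9
  have hpin : Real.pi/n ≤ 3.15/100 :=
    div_le_div₀ (by norm_num) Real.pi_lt_d2.le (by norm_num) hn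
  have h3n : (3:ℝ)/n ≤ 3/100 :=
    div_le_div₀ (by norm_num) (by norm_num) (by norm_num) hn
  linarith

lemma caseC_final {n E : ℝ} (hn : 100 ≤ n) (hE : E ≤ Real.exp 1) :
    E + E + 2*(-1:ℝ) ≤ 4 - 3/n := by
  have hnpos : (0:ℝ) < n := by linarith
  have he1 : Real.exp 1 < 2.7182818286 := Real.exp_one_lt_d9
  have h3n : (3:ℝ)/n ≤ 3/100 :=
    div_le_div₀ (by norm_num) (by norm_num) (by norm_num) hn
  linarith

lemma row0_final {n : ℝ} (hn : 100 ≤ n) :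
    Real.exp (-(2/n)) + Real.exp (-(2/n)) + 2*(1:ℝ) ≤ 4 - 3/n := by
  have hnpos : (0:ℝ) < n := by linarith
  have hh0 : (0:ℝ) ≤ 2/n := by positivity
  have hce := exp_neg_le_quad hh0
  have hu0 : 0 < 1/n := by positivity
  have hun : 1/n ≤ 1/100 := by
    apply one_div_le_one_div_of_le <;> linarith
  have pu : (1/n)*(1/n) ≤ (1/n)*(1/100) :=
    mul_le_mul_of_nonneg_left hun hu0.le
  have e1 : (2/n)^2 = 4*((1/n)*(1/n)) := by ring
  have e2 : (2:ℝ)/n = 2*(1/n) := by ring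
  have e3 : (3:ℝ)/n = 3*(1/n) := by ring
  rw [e1, e2] at hce
  rw [e2, e3]
  linarith

noncomputable def hmInc (n j : ℕ) : ℝ := min (4 * ((j : ℝ) + 1/2) / n) 1

noncomputable def hmPhi (n d : ℕ) : ℝ := ∑ j ∈ Finset.range d, hmInc n j

noncomputable def hmPsi (n k : ℕ) : ℝ := hmPhi n (min k (n - k))

lemma hmInc_nonneg (n j : ℕ) : 0 ≤ hmInc n j := by
  unfold hmInc
  apply le_min
  · positivity
  · norm_num

lemma hmInc_le_one (n j : ℕ) : hmInc n j ≤ 1 := min_le_right _ _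

lemma hmPhi_mono (n : ℕ) {d d' : ℕ} (h : d ≤ d') : hmPhi n d ≤ hmPhi n d' := by
  unfold hmPhi
  exact Finset.sum_le_sum_of_subset_of_nonneg (Finset.range_subset_range.2 h)
    (fun j _ _ => hmInc_nonneg n j)

lemma hmPhi_succ (n d : ℕ) : hmPhi n (d+1) = hmPhi n d + hmInc n d :=
  Finset.sum_range_succ _ _

lemma hmPsi_symm (n k : ℕ) (h : k ≤ n) : hmPsi n (n - k) = hmPsi n k := by
  unfold hmPsi
  congr 1
  omega

lemma caseA_numeric {n : ℝ} (hn : 100 ≤ n) {M co : ℝ} (hM : M = 4 - 2*co) :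
    M - 2*(2/n) + 3*(2/n)^2 + 2*co ≤ 4 - 3/n := by
  have hnpos : (0:ℝ) < n := by linarith
  have hu0 : 0 < 1/n := by positivity
  have hun : 1/n ≤ 1/100 := by
    apply one_div_le_one_div_of_le <;> linarith
  have pu : (1/n)*(1/n) ≤ (1/n)*(1/100) :=
    mul_le_mul_of_nonneg_left hun hu0.le
  have e1 : (2/n)^2 = 4*((1/n)*(1/n)) := by ring
  have e2 : (2:ℝ)/n = 2*(1/n) := by ring
  have e3 : (3:ℝ)/n = 3*(1/n) := by ring
  rw [hM, e1, e2, e3]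
  linarith

lemma key_low (n k : ℕ) (hn : 100 ≤ n) (hk1 : 1 ≤ k) (hk2 : 2*k ≤ n) :
    Real.exp (hmPsi n k - hmPsi n (k+1)) + Real.exp (hmPsi n k - hmPsi n (k-1))
      + 2 * Real.cos (2*Real.pi*k/n) ≤ 4 - 3/n := by
  have hnR : (100:ℝ) ≤ n := by exact_mod_cast hn
  have hnpos : (0:ℝ) < n := by linarith
  have hkR : (1:ℝ) ≤ k := by exact_mod_cast hk1
  have hk2R : 2*(k:ℝ) ≤ n := by exact_mod_cast hk2
  have hpk : hmPsi n k = hmPhi n k := by unfold hmPsi; congr 1; omega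
  have hpk1 : hmPsi n (k-1) = hmPhi n (k-1) := by unfold hmPsi; congr 1; omega
  have hksub : k - 1 + 1 = k := by omega
  have hphik : hmPhi n k = hmPhi n (k-1) + hmInc n (k-1) := by
    conv_lhs => rw [← hksub, hmPhi_succ]
  have hkc : ((k-1 : ℕ) : ℝ) = (k:ℝ) - 1 := by
    push_cast [Nat.cast_sub hk1]; ring
  rcases le_or_gt (4 * ((k:ℝ) + 1/2) / n) 1 with hA | hB
  · -- Case A
    have hA' : 4*((k:ℝ) + 1/2) ≤ n := by rwa [div_le_one hnpos] at hA
    have h2k2 : 2*(k+1) ≤ n := by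
      have : (2:ℝ)*((k:ℝ)+1) ≤ n := by linarith
      exact_mod_cast this
    have hpk2 : hmPsi n (k+1) = hmPhi n (k+1) := by unfold hmPsi; congr 1; omega
    have hinck : hmInc n k = 4 * ((k:ℝ) + 1/2) / n := min_eq_left hA
    have hinck1 : hmInc n (k-1) = 4 * (((k:ℝ)-1) + 1/2) / n := by
      unfold hmInc
      rw [hkc]
      apply min_eq_left
      rw [div_le_one hnpos]
      linarith
    have hd1 : hmPsi n k - hmPsi n (k+1) = -(4*(k:ℝ)/n + 2/n) := by
      rw [hpk, hpk2, hmPhi_succ, hinck]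
      field_simp
      ring
    have hd2 : hmPsi n k - hmPsi n (k-1) = 4*(k:ℝ)/n - 2/n := by
      rw [hpk, hpk1, hphik, hinck1]
      field_simp
      ring
    rw [hd1, hd2]
    set a : ℝ := 4*(k:ℝ)/n with ha_def
    set h : ℝ := 2/(n:ℝ) with hh_def
    have hh0 : 0 ≤ h := by positivity
    have ha0 : 0 ≤ a := by positivity
    have ha1 : a ≤ 1 := by
      rw [ha_def, div_le_one hnpos]; linarith
    have hsplit1 : -(a + h) = -h + -a := by ring
    have hsplit2 : a - h = -h + a := by ring
    rw [hsplit1, hsplit2, Real.exp_add, Real.exp_add]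
    have hC := exp_add_exp_neg_le ha0 ha1
    set C : ℝ := Real.exp a + Real.exp (-a) with hC_def
    have hC2 : 2 ≤ C := by
      have g1 := Real.add_one_le_exp a
      have g2 := Real.add_one_le_exp (-a)
      rw [hC_def]; linarith
    have hx14 : (k:ℝ)/n ≤ 1/4 := by
      rw [div_le_iff₀ hnpos]; linarith
    have hx0 : 0 ≤ (k:ℝ)/n := by positivity
    set x : ℝ := (k:ℝ)/n with hx_def
    have hax : a = 4*x := by rw [ha_def, hx_def]; ring
    have hth : 2*Real.pi*k/n = 2*Real.pi*x := by rw [hx_def]; ring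
    have hpix : Real.pi * x ≤ 3.15 * (1/4) :=
      mul_le_mul Real.pi_lt_d2.le hx14 hx0 (by norm_num)
    have hs2 : 2*Real.pi*x ≤ 2 := by linarith
    have hs0 : 0 ≤ 2*Real.pi*x := by positivity
    have hcos := cos_le_quad hs0 hs2
    have hc' : C ≤ 2 + (4*x)^2 + (4*x)^4/8 := by rw [← hax]; exact hC
    have hcore : C ≤ 4 - 2*Real.cos (2*Real.pi*x) := coreA hx0 hx14 hcos hc'
    set M : ℝ := 4 - 2*Real.cos (2*Real.pi*x) with hM_def
    have hM6 : M ≤ 6 := by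
      have := Real.neg_one_le_cos (2*Real.pi*x); rw [hM_def]; linarith
    have hce := exp_neg_le_quad hh0
    have hCpos : 0 < C := by linarith
    have e1 : Real.exp (-h) * Real.exp (-a) + Real.exp (-h) * Real.exp a
        = Real.exp (-h) * C := by rw [hC_def]; ring
    rw [hth, e1]
    have e2 : Real.exp (-h) * C ≤ (1 - h + h^2/2) * C :=
      mul_le_mul_of_nonneg_right hce (le_of_lt hCpos)
    have e3 := caseA_assemble hh0 hC2 hcore hM6
    have final := caseA_numeric hnR (M := M) (co := Real.cos (2*Real.pi*x)) hM_def
    rw [hh_def] at e3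
    linarith
  · -- Cases B/C
    have hB' : (n:ℝ) < 4*((k:ℝ) + 1/2) := by
      rw [lt_div_iff₀ hnpos] at hB; linarith
    have hexp2 : Real.exp (hmPsi n k - hmPsi n (k-1)) ≤ Real.exp 1 := by
      apply Real.exp_le_exp.2
      rw [hpk, hpk1, hphik]
      have := hmInc_le_one n (k-1); linarith
    rcases lt_or_eq_of_le hk2 with hlt | heq
    · -- Case B
      have hfirst : Real.exp (hmPsi n k - hmPsi n (k+1)) ≤ 1 := by
        rw [← Real.exp_zero]
        apply Real.exp_le_exp.2
        have : hmPhi n k ≤ hmPsi n (k+1) := by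
          unfold hmPsi
          apply hmPhi_mono
          omega
        rw [hpk]; linarith
      have hcosb : Real.cos (2*Real.pi*k/n) ≤ Real.pi/n :=
        cos_bound_B hnR (by positivity) (by linarith) hk2R
      exact caseB_final hnR hfirst hexp2 hcosb
    · -- Case C
      have hpk2 : hmPsi n (k+1) = hmPhi n (k-1) := by unfold hmPsi; congr 1; omega
      have hfirst : Real.exp (hmPsi n k - hmPsi n (k+1)) ≤ Real.exp 1 := by
        apply Real.exp_le_exp.2
        rw [hpk, hpk2, hphik]
        have := hmInc_le_one n (k-1); linarith
      have hcosc : Real.cos (2*Real.pi*k/n) = -1 := by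
        have hnk : (n:ℝ) = 2*(k:ℝ) := by exact_mod_cast heq.symm
        have : 2*Real.pi*(k:ℝ)/n = Real.pi := by
          rw [hnk]; field_simp
        rw [this, Real.cos_pi]
      rw [hcosc]
      calc Real.exp (hmPsi n k - hmPsi n (k+1)) + Real.exp (hmPsi n k - hmPsi n (k-1)) + 2*(-1:ℝ)
          ≤ Real.exp 1 + Real.exp 1 + 2*(-1:ℝ) := by linarith
        _ ≤ 4 - 3/n := by
            have := caseC_final hnR (le_refl (Real.exp 1)); linarith

lemma key (n : ℕ) (hn : 100 ≤ n) (k : ℕ) (hk : k < n) :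
    Real.exp (hmPsi n k - hmPsi n ((k+1) % n))
      + Real.exp (hmPsi n k - hmPsi n ((k + (n-1)) % n))
      + 2 * Real.cos (2*Real.pi*k/n) ≤ 4 - 3/n := by
  have hnR : (100:ℝ) ≤ n := by exact_mod_cast hn
  have hnpos : (0:ℝ) < n := by linarith
  rcases Nat.eq_zero_or_pos k with rfl | hk1
  · -- row 0
    have h1 : (0+1) % n = 1 := Nat.mod_eq_of_lt (by omega)
    have h2 : (0 + (n-1)) % n = n-1 := by
      rw [Nat.zero_add]; exact Nat.mod_eq_of_lt (by omega)
    rw [h1, h2]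
    have hps0 : hmPsi n 0 = 0 := by simp [hmPsi, hmPhi]
    have hphi1 : hmPhi n 1 = hmInc n 0 := by simp [hmPhi]
    have hps1 : hmPsi n 1 = hmInc n 0 := by
      unfold hmPsi
      rw [show min 1 (n-1) = 1 by omega]
      exact hphi1
    have hpsn1 : hmPsi n (n-1) = hmInc n 0 := by
      unfold hmPsi
      rw [show min (n-1) (n-(n-1)) = 1 by omega]
      exact hphi1
    have hinc0 : hmInc n 0 = 2/n := by
      unfold hmInc
      rw [min_eq_left]
      · norm_num
      · rw [div_le_one hnpos]; norm_num; linarith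
    have hcos0 : Real.cos (2*Real.pi*(0:ℕ)/n) = 1 := by
      norm_num
    rw [hps0, hps1, hpsn1, hinc0, hcos0]
    have := row0_final hnR
    have hz : (0:ℝ) - 2/n = -(2/n) := by ring
    rw [hz]
    linarith
  · rcases le_or_gt (2*k) n with hk2 | hk2
    · -- direct case
      have hsucc : (k+1) % n = k+1 := Nat.mod_eq_of_lt (by omega)
      have hpred : (k + (n-1)) % n = k-1 := by
        rw [show k + (n-1) = (k-1) + n by omega, Nat.add_mod_right]
        exact Nat.mod_eq_of_lt (by omega)
      rw [hsucc, hpred]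
      exact key_low n k hn hk1 hk2
    · -- mirror case
      set j := n - k with hj_def
      have hj1 : 1 ≤ j := by omega
      have hj2 : 2*j ≤ n := by omega
      have hjk : n - j = k := by omega
      have hpsk : hmPsi n k = hmPsi n j := by
        rw [← hjk]; exact hmPsi_symm n j (by omega)
      have hsucc : hmPsi n ((k+1) % n) = hmPsi n (j-1) := by
        rcases Nat.lt_or_ge (k+1) n with hlt | hge
        · rw [Nat.mod_eq_of_lt hlt,
            show k+1 = n - (j-1) by omega]
          exact hmPsi_symm n (j-1) (by omega)
        · have hkn : k+1 = n := by omega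
          have hj1' : j = 1 := by omega
          rw [hkn, Nat.mod_self, hj1']
      have hpred : hmPsi n ((k + (n-1)) % n) = hmPsi n (j+1) := by
        have : (k + (n-1)) % n = k-1 := by
          rw [show k + (n-1) = (k-1) + n by omega, Nat.add_mod_right]
          exact Nat.mod_eq_of_lt (by omega)
        rw [this, show k-1 = n - (j+1) by omega]
        exact hmPsi_symm n (j+1) (by omega)
      have hcos : Real.cos (2*Real.pi*k/n) = Real.cos (2*Real.pi*j/n) := by
        have hkr : (k:ℝ) = (n:ℝ) - j := by
          rw [← hjk]
          push_cast [Nat.cast_sub (show j ≤ n by omega)]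
          ring
        rw [hkr]
        have harg : 2*Real.pi*((n:ℝ) - j)/n = 2*Real.pi - 2*Real.pi*j/n := by
          field_simp
        rw [harg, Real.cos_two_pi_sub]
      rw [hpsk, hsucc, hpred, hcos]
      have := key_low n j hn hj1 hj2
      linarith

lemma spec_bound (n : ℕ) (hn : 100 ≤ n) (μ : ℝ) (hμ : μ ∈ spectrum ℝ (heisMatrix n 1)) :
    μ ≤ 4 - 3/n := by
  have hn0 : 0 < n := by omega
  set A := heisMatrix n 1 with hA_def
  set g : Fin n → ℝ := fun i => Real.exp (-(hmPsi n (i : ℕ))) with hg_def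
  have hgpos : ∀ i, 0 < g i := fun i => Real.exp_pos _
  have hgne : ∀ i, g i ≠ 0 := fun i => (hgpos i).ne'
  -- the diagonal unit
  set u : (Matrix (Fin n) (Fin n) ℝ)ˣ :=
    { val := Matrix.diagonal g
      inv := Matrix.diagonal (fun i => (g i)⁻¹)
      val_inv := by
        rw [Matrix.diagonal_mul_diagonal,
          show (fun i => g i * (g i)⁻¹) = (fun _ => (1:ℝ)) from
            funext fun i => mul_inv_cancel₀ (hgne i), Matrix.diagonal_one]
      inv_val := by
        rw [Matrix.diagonal_mul_diagonal,
          show (fun i => (g i)⁻¹ * g i) = (fun _ => (1:ℝ)) from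
            funext fun i => inv_mul_cancel₀ (hgne i), Matrix.diagonal_one] } with hu_def
  set B := (↑u⁻¹ : Matrix (Fin n) (Fin n) ℝ) * A * (↑u : Matrix (Fin n) (Fin n) ℝ) with hB_def
  have hspec : μ ∈ spectrum ℝ B := by
    rw [hB_def, spectrum.units_conjugate']
    exact hμ
  have hev : Module.End.HasEigenvalue (Matrix.toLin' B) μ := by
    have : μ ∈ spectrum ℝ ((Matrix.toLinAlgEquiv (Pi.basisFun ℝ (Fin n))) B) := by
      rwa [AlgEquiv.spectrum_eq]
    exact Module.End.hasEigenvalue_iff_mem_spectrum.mpr this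
  obtain ⟨i, hball⟩ := eigenvalue_mem_ball hev
  rw [Metric.mem_closedBall, Real.dist_eq] at hball
  have hball' : μ ≤ B i i + ∑ j ∈ Finset.univ.erase i, ‖B i j‖ := by
    have := abs_sub_le_iff.mp hball
    linarith [this.1]
  -- entries of B
  have hBij : ∀ j : Fin n, B i j = (g i)⁻¹ * (A i j * g j) := by
    intro j
    rw [hB_def]
    show ((Matrix.diagonal (fun i => (g i)⁻¹) * A) * Matrix.diagonal g) i j = _
    rw [Matrix.mul_diagonal, Matrix.diagonal_mul]
    ring
  have hBii : B i i = A i i := by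
    rw [hBij i, inv_mul_eq_div, mul_div_assoc, div_self (hgne i), mul_one]
  have hAii : A i i = 2 * Real.cos (2 * Real.pi * (i:ℕ) / n) := by
    rw [hA_def]
    show (if i = i then 2 * Real.cos (2 * Real.pi * ((1:ℕ):ℝ) * (i : ℕ) / n) else _) = _
    rw [if_pos rfl]
    norm_num
  set k : ℕ := (i : ℕ) with hk_def
  have hkn : k < n := i.isLt
  set ip : Fin n := ⟨(k+1) % n, Nat.mod_lt _ hn0⟩ with hip_def
  set im : Fin n := ⟨(k+(n-1)) % n, Nat.mod_lt _ hn0⟩ with him_def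
  have hmod1 : (k+1) % n = k+1 ∨ ((k+1) % n = 0 ∧ k+1 = n) := by
    rcases Nat.lt_or_ge (k+1) n with h | h
    · exact Or.inl (Nat.mod_eq_of_lt h)
    · have : k+1 = n := by omega
      exact Or.inr ⟨by rw [this, Nat.mod_self], this⟩
  have hmod2 : (1 ≤ k ∧ (k+(n-1)) % n = k-1) ∨ (k = 0 ∧ (k+(n-1)) % n = n-1) := by
    rcases Nat.eq_zero_or_pos k with h | h
    · refine Or.inr ⟨h, ?_⟩
      rw [h, Nat.zero_add]
      exact Nat.mod_eq_of_lt (by omega)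
    · refine Or.inl ⟨h, ?_⟩
      rw [show k + (n-1) = (k-1) + n by omega, Nat.add_mod_right]
      exact Nat.mod_eq_of_lt (by omega)
  have hip_ne : ip ≠ i := by
    intro h
    have hv : (k+1) % n = k := congrArg Fin.val h
    rcases hmod1 with h1 | ⟨h1, h2⟩ <;> omega
  have him_ne : im ≠ i := by
    intro h
    have hv : (k+(n-1)) % n = k := congrArg Fin.val h
    rcases hmod2 with ⟨h0, h1⟩ | ⟨h1, h2⟩ <;> omega
  have hip_ne_im : ip ≠ im := by
    intro h
    have hv : (k+1) % n = (k+(n-1)) % n := congrArg Fin.val h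
    rcases hmod1 with h1 | ⟨h1, h2⟩ <;> rcases hmod2 with ⟨h0, h3⟩ | ⟨h3, h4⟩ <;> omega
  -- values of A on the off-diagonal
  have hAip : A i ip = 1 := by
    rw [hA_def]
    show (if i = ip then _ else if ((i:ℕ) + 1) % n = ((ip:ℕ)) ∨ _ then (1:ℝ) else 0) = 1
    rw [if_neg (Ne.symm hip_ne), if_pos]
    left
    rfl
  have hAim : A i im = 1 := by
    rw [hA_def]
    show (if i = im then _ else if _ ∨ ((im:ℕ) + 1) % n = (i:ℕ) then (1:ℝ) else 0) = 1
    rw [if_neg (Ne.symm him_ne), if_pos]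
    right
    show ((k+(n-1)) % n + 1) % n = k
    rw [Nat.mod_add_mod, show k + (n-1) + 1 = k + n by omega, Nat.add_mod_right]
    exact Nat.mod_eq_of_lt hkn
  have hAzero : ∀ j : Fin n, j ≠ i → j ≠ ip → j ≠ im → A i j = 0 := by
    intro j hji hjp hjm
    rw [hA_def]
    show (if i = j then _ else if ((i:ℕ) + 1) % n = (j:ℕ) ∨ ((j:ℕ) + 1) % n = (i:ℕ) then (1:ℝ) else 0) = 0
    rw [if_neg (Ne.symm hji), if_neg]
    rintro (h | h)
    · exact hjp (Fin.ext h.symm)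
    · apply hjm
      apply Fin.ext
      have h' : ((j:ℕ) + 1) % n = k := h
      show (j:ℕ) = (k+(n-1)) % n
      have : (k+(n-1)) % n = (j:ℕ) := by
        rw [← h', Nat.mod_add_mod, show (j:ℕ)+1+(n-1) = (j:ℕ)+n by omega,
          Nat.add_mod_right]
        exact Nat.mod_eq_of_lt j.isLt
      exact this.symm
  -- evaluate the Gershgorin radius
  have hsum : ∑ j ∈ Finset.univ.erase i, ‖B i j‖
      = Real.exp (hmPsi n k - hmPsi n ((k+1) % n))
        + Real.exp (hmPsi n k - hmPsi n ((k+(n-1)) % n)) := by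
    have hsubset : ({ip, im} : Finset (Fin n)) ⊆ Finset.univ.erase i := by
      intro j hj
      rcases Finset.mem_insert.mp hj with rfl | hj
      · exact Finset.mem_erase.mpr ⟨hip_ne, Finset.mem_univ _⟩
      · rcases Finset.mem_singleton.mp hj with rfl
        exact Finset.mem_erase.mpr ⟨him_ne, Finset.mem_univ _⟩
    have hzero : ∀ j ∈ Finset.univ.erase i, j ∉ ({ip, im} : Finset (Fin n)) → ‖B i j‖ = 0 := by
      intro j hj hnot
      have hji : j ≠ i := (Finset.mem_erase.mp hj).1
      have hjp : j ≠ ip := by intro h; exact hnot (by simp [h])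
      have hjm : j ≠ im := by intro h; exact hnot (by simp [h])
      rw [hBij j, hAzero j hji hjp hjm]
      simp
    rw [← Finset.sum_subset hsubset hzero, Finset.sum_pair hip_ne_im]
    have hgval : ∀ j : Fin n, g j = Real.exp (-(hmPsi n (j:ℕ))) := fun j => rfl
    have hterm : ∀ j : Fin n, A i j = 1 → ‖B i j‖ = Real.exp (hmPsi n k - hmPsi n (j:ℕ)) := by
      intro j hAj
      have hgi : g i = Real.exp (-(hmPsi n k)) := rfl
      rw [hBij j, hAj, hgval j, hgi]
      rw [one_mul, ← Real.exp_neg, ← Real.exp_add]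
      rw [Real.norm_eq_abs, abs_of_pos (Real.exp_pos _)]
      congr 1
      ring
    rw [hterm ip hAip, hterm im hAim]
  have hkey := key n hn k hkn
  calc μ ≤ B i i + ∑ j ∈ Finset.univ.erase i, ‖B i j‖ := hball'
    _ = 2 * Real.cos (2*Real.pi*k/n)
        + (Real.exp (hmPsi n k - hmPsi n ((k+1) % n))
          + Real.exp (hmPsi n k - hmPsi n ((k+(n-1)) % n))) := by
        rw [hsum, hBii, hAii]
    _ ≤ 4 - 3/n := by linarith

/-- for sufficiently large n, the largest eigenvalue λ_n of the matrix
A_n (the case q = 1) satisfies λ_n < 4 - 2/n. -/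
theorem heisMatrix_top_eigenvalue_upper_bound :
    ∃ N : ℕ, ∀ n : ℕ, N ≤ n →
      sSup (spectrum ℝ (heisMatrix n 1)) < 4 - 2 / (n : ℝ) := by
  refine ⟨100, fun n hn => ?_⟩
  have hnR : (100:ℝ) ≤ n := by exact_mod_cast hn
  have hnpos : (0:ℝ) < n := by linarith
  have h3n : (3:ℝ)/n ≤ 3/100 :=
    div_le_div₀ (by norm_num) (by norm_num) (by norm_num) hnR
  have hle : sSup (spectrum ℝ (heisMatrix n 1)) ≤ 4 - 3/n :=
    Real.sSup_le (fun μ hμ => spec_bound n hn μ hμ) (by linarith)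
  have hlt : (2:ℝ)/n < 3/n := by
    apply div_lt_div_of_pos_right (by norm_num) hnpos
  linarith
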